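/- Assume δ_i·δ_j' ≡ 0 for all i,j, the 2n vectors δ_1(t),…,δ_n(t),δ_1'(t),…,δ_n'(t) are linearly independent for each t, and γ is a striction curve (γ'·δ_i' ≡ 0 for all i). Then the set of singular points of F_{(γ,δ)} (the points (t,u) where the differential of F_{(γ,δ)} has rank < n+1) is exactly J × {0}, i.e. the points with u_1 = ⋯ = u_n = 0. -/

import Mathlib

open Filter Topology Matrix

noncomputable section

/-- The standard inner product on `ℝ^N`. -/
def dp {N : ℕ} (v w : Fin N → ℝ) : ℝ := ∑ i, v i * w i

/-- The Gram matrix `G(t) = (δ_i'(t) · δ_j'(t))_{i,j}`. -/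
def gram {n : ℕ} (δ : Fin n → ℝ → (Fin (2 * n) → ℝ)) (t : ℝ) : Matrix (Fin n) (Fin n) ℝ :=
  Matrix.of fun i j => dp (deriv (δ i) t) (deriv (δ j) t)

/-- `(u_1(t), …, u_n(t)) = - G(t)⁻¹ (γ'(t)·δ_1'(t), …, γ'(t)·δ_n'(t))`. -/
def strictU {n : ℕ} (γ : ℝ → (Fin (2 * n) → ℝ)) (δ : Fin n → ℝ → (Fin (2 * n) → ℝ))
    (t : ℝ) : Fin n → ℝ :=
  -((gram δ t)⁻¹.mulVec (fun i => dp (deriv γ t) (deriv (δ i) t)))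

/-- The curve `σ(t) = γ(t) + Σ_i u_i(t) δ_i(t)`. -/
def strictCurve {n : ℕ} (γ : ℝ → (Fin (2 * n) → ℝ)) (δ : Fin n → ℝ → (Fin (2 * n) → ℝ))
    (t : ℝ) : Fin (2 * n) → ℝ :=
  γ t + ∑ i, strictU γ δ t i • δ i t

/-- The one-parameter family of `n`-planes `F_{(γ,δ)}(t,u) = γ(t) + Σ_i u_i δ_i(t)`. -/
def ruled {n : ℕ} (γ : ℝ → (Fin (2 * n) → ℝ)) (δ : Fin n → ℝ → (Fin (2 * n) → ℝ)) :
    ℝ × (Fin n → ℝ) → (Fin (2 * n) → ℝ) :=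
  fun p => γ p.1 + ∑ i, p.2 i • δ i p.1

/-- `F_{(γ,δ)}` viewed as a map `ℝ^{n+1} → ℝ^{2n}`, `x = (t, u_1, …, u_n)`. -/
def ruledF {n : ℕ} (γ : ℝ → (Fin (2 * n) → ℝ)) (δ : Fin n → ℝ → (Fin (2 * n) → ℝ)) :
    (Fin (n + 1) → ℝ) → (Fin (2 * n) → ℝ) :=
  fun x => γ (x 0) + ∑ i, x i.succ • δ i (x 0)

/-- The point `(t₀, 0, …, 0) ∈ ℝ^{n+1}`. -/
def bpt {n : ℕ} (t₀ : ℝ) : Fin (n + 1) → ℝ := fun k => if k = 0 then t₀ else 0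

def xhat' {m : ℕ} (x : Fin m → ℝ) (q : ℕ) : ℝ := if h : q < m then x ⟨q, h⟩ else 0

/-- The `1`-Morin (Whitney-umbrella type) normal form
`(x_1, …, x_n, x_1x_{n+1}, …, x_{n-1}x_{n+1}, x_{n+1}²) : (ℝ^{n+1},0) → (ℝ^{2n},0)`. -/
def whitneyNF (n : ℕ) : (Fin (n + 1) → ℝ) → (Fin (2 * n) → ℝ) := fun x k =>
  if k.val < n then xhat' x k.val
  else if k.val < 2 * n - 1 then xhat' x (k.val - n) * xhat' x n
  else (xhat' x n) ^ 2

/-- `δ_q(t)` with a `ℕ` index (`0` if out of range). -/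
def dhat {n : ℕ} (δ : Fin n → ℝ → (Fin (2 * n) → ℝ)) (q : ℕ) (t : ℝ) : Fin (2 * n) → ℝ :=
  if h : q < n then δ ⟨q, h⟩ t else 0

/-- `δ_q'(t)` with a `ℕ` index (`0` if out of range). -/
def dphat {n : ℕ} (δ : Fin n → ℝ → (Fin (2 * n) → ℝ)) (q : ℕ) (t : ℝ) : Fin (2 * n) → ℝ :=
  if h : q < n then deriv (δ ⟨q, h⟩) t else 0

/-- `λ_j(t,u) = det(γ'(t) + Σ_i u_iδ_i'(t), δ_1(t), …, δ_n(t),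
δ_1'(t), …, δ_{j-1}'(t), δ_{j+1}'(t), …, δ_n'(t))` (here `j : Fin n` is `0`-indexed,
correspondig to the paper's `λ_{j+1}`); the entries of the matrix are listed as columns. -/
def lamRuled {n : ℕ} (γ : ℝ → (Fin (2 * n) → ℝ)) (δ : Fin n → ℝ → (Fin (2 * n) → ℝ))
    (j : Fin n) : ℝ × (Fin n → ℝ) → ℝ := fun p =>
  Matrix.det (Matrix.of fun (row col : Fin (2 * n)) =>
    if col.val = 0 then (deriv γ p.1 + ∑ i, p.2 i • deriv (δ i) p.1) row
    else if col.val < n + 1 then dhat δ (col.val - 1) p.1 row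
    else dphat δ
      (if col.val - (n + 1) < j.val then col.val - (n + 1) else col.val - (n + 1) + 1)
      p.1 row)

/-- `Δ(t) = det(δ_1(t), …, δ_n(t), δ_1'(t), …, δ_n'(t))` (columns). -/
def bigDelta {n : ℕ} (δ : Fin n → ℝ → (Fin (2 * n) → ℝ)) (t : ℝ) : ℝ :=
  Matrix.det (Matrix.of fun (row col : Fin (2 * n)) =>
    if col.val < n then dhat δ col.val t row else dphat δ (col.val - n) t row)


section Aux

open Set Submodule

/-- `dp` as a linear map in the first argument. -/
def dpL {N : ℕ} (w : Fin N → ℝ) : (Fin N → ℝ) →ₗ[ℝ] ℝ where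
  toFun v := dp v w
  map_add' v₁ v₂ := by simp [dp, add_mul, Finset.sum_add_distrib]
  map_smul' c v := by simp [dp, Finset.mul_sum, mul_assoc]

lemma dp_self_eq_zero' {N : ℕ} {v : Fin N → ℝ} (h : dp v v = 0) : v = 0 := by
  funext k
  have h2 : ∀ i ∈ Finset.univ, (0:ℝ) ≤ v i * v i := fun i _ => mul_self_nonneg _
  have := (Finset.sum_eq_zero_iff_of_nonneg h2).1 h k (Finset.mem_univ k)
  simpa [mul_self_eq_zero] using this

lemma dp_comm' {N : ℕ} (v w : Fin N → ℝ) : dp v w = dp w v := by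
  simp [dp, mul_comm]

lemma dp_add_left' {N : ℕ} (a b w : Fin N → ℝ) : dp (a + b) w = dp a w + dp b w := by
  simp [dp, add_mul, Finset.sum_add_distrib]

lemma dp_sum_left' {N : ℕ} {ι : Type*} [Fintype ι] (c : ι → ℝ) (x : ι → Fin N → ℝ)
    (w : Fin N → ℝ) : dp (∑ i, c i • x i) w = ∑ i, c i * dp (x i) w := by
  simp only [dp, Finset.sum_apply, Pi.smul_apply, smul_eq_mul, Finset.sum_mul, Finset.mul_sum]
  rw [Finset.sum_comm]
  exact Finset.sum_congr rfl fun i _ => Finset.sum_congr rfl fun k _ => by ring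

lemma span_perp' {N : ℕ} {s : Set (Fin N → ℝ)} {w : Fin N → ℝ}
    (h : ∀ x ∈ s, dp x w = 0) : ∀ x ∈ Submodule.span ℝ s, dp x w = 0 := by
  intro x hx
  have hle : Submodule.span ℝ s ≤ LinearMap.ker (dpL w) :=
    Submodule.span_le.2 (fun y hy => LinearMap.mem_ker.2 (h y hy))
  exact LinearMap.mem_ker.1 (hle hx)

lemma gram_inj' {n N : ℕ} (dv' : Fin n → Fin N → ℝ) (hli' : LinearIndependent ℝ dv')
    (c : Fin n → ℝ) (hc : ∀ j, ∑ i, c i * dp (dv' i) (dv' j) = 0) : c = 0 := by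
  have hwj : ∀ j, dp (∑ i, c i • dv' i) (dv' j) = 0 := by
    intro j; rw [dp_sum_left']; exact hc j
  have h0 : dp (∑ i, c i • dv' i) (∑ i, c i • dv' i) = 0 := by
    rw [dp_comm', dp_sum_left']
    exact Finset.sum_eq_zero fun j _ => by rw [dp_comm', hwj j, mul_zero]
  have hw := dp_self_eq_zero' h0
  have := linearIndependent_iff'.1 hli' Finset.univ c (by simpa using hw)
  funext i; exact this i (Finset.mem_univ i)

lemma mem_span_of_perp' {n : ℕ} (hn : 0 < n) {dv dv' : Fin n → Fin (2 * n) → ℝ}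
    {g : Fin (2 * n) → ℝ}
    (hlin : LinearIndependent ℝ (Sum.elim dv dv'))
    (hperp : ∀ i j, dp (dv i) (dv' j) = 0)
    (hg : ∀ j, dp g (dv' j) = 0) : g ∈ Submodule.span ℝ (Set.range dv) := by
  classical
  haveI : Nonempty (Fin n ⊕ Fin n) := ⟨Sum.inl ⟨0, hn⟩⟩
  have hcard : Fintype.card (Fin n ⊕ Fin n) = Module.finrank ℝ (Fin (2 * n) → ℝ) := by
    simp [two_mul]
  let B := basisOfLinearIndependentOfCardEqFinrank hlin hcard
  have hB : ⇑B = Sum.elim dv dv' := coe_basisOfLinearIndependentOfCardEqFinrank _ _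
  set c : (Fin n ⊕ Fin n) → ℝ := fun k => B.repr g k with hcdef
  have hsum : ∑ k, c k • Sum.elim dv dv' k = g := by rw [← hB]; exact B.sum_repr g
  have hsum2 : (∑ i, c (Sum.inl i) • dv i) + (∑ i, c (Sum.inr i) • dv' i) = g := by
    rw [← hsum, Fintype.sum_sum_type]; simp
  have hz : ∀ j, ∑ i, c (Sum.inr i) * dp (dv' i) (dv' j) = 0 := by
    intro j
    have h1 : dp g (dv' j) = (∑ i, c (Sum.inl i) * dp (dv i) (dv' j))
        + ∑ i, c (Sum.inr i) * dp (dv' i) (dv' j) := by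
      rw [← hsum2, dp_add_left', dp_sum_left', dp_sum_left']
    rw [hg j] at h1
    simpa [hperp] using h1.symm
  have hli' : LinearIndependent ℝ dv' := hlin.comp Sum.inr Sum.inr_injective
  have hc0 : (fun i => c (Sum.inr i)) = 0 := gram_inj' dv' hli' _ hz
  have hg2 : g = ∑ i, c (Sum.inl i) • dv i := by
    rw [← hsum2]
    simp [show ∀ i, c (Sum.inr i) = 0 from fun i => congrFun hc0 i]
  rw [hg2]
  exact Submodule.sum_mem _ fun i _ =>
    Submodule.smul_mem _ _ (Submodule.subset_span ⟨i, rfl⟩)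

lemma rank_lemma' {n N : ℕ} (M : ℝ × (Fin n → ℝ) →L[ℝ] (Fin N → ℝ))
    (v : Fin N → ℝ) (dv : Fin n → Fin N → ℝ)
    (hMapp : ∀ s (w : Fin n → ℝ), M (s, w) = s • v + ∑ i, w i • dv i)
    (hlidv : LinearIndependent ℝ dv) :
    (Module.finrank ℝ (LinearMap.range M.toLinearMap) < n + 1 ↔ v ∈ span ℝ (range dv)) := by
  classical
  set b : Fin (n + 1) → (Fin N → ℝ) := Fin.cons v dv with hb
  have hrange : LinearMap.range M.toLinearMap = span ℝ (range b) := by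
    apply le_antisymm
    · rintro x ⟨p, rfl⟩
      have h1 : M p = p.1 • v + ∑ i, p.2 i • dv i := hMapp p.1 p.2
      rw [ContinuousLinearMap.coe_coe, h1]
      refine add_mem (smul_mem _ _ (subset_span ⟨0, by simp [hb]⟩))
        (sum_mem fun i _ => smul_mem _ _ (subset_span ⟨i.succ, by simp [hb]⟩))
    · rw [span_le]
      rintro x ⟨k, rfl⟩
      refine Fin.cases ?_ ?_ k
      · exact ⟨(1, 0), by simp [hMapp 1 0, hb]⟩
      · intro i
        refine ⟨(0, Pi.single i 1), ?_⟩
        rw [ContinuousLinearMap.coe_coe, hMapp 0 (Pi.single i 1)]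
        simp [Pi.single_apply, hb]
  rw [hrange]
  have hle : Module.finrank ℝ (span ℝ (range b)) ≤ n + 1 := by
    simpa [Set.finrank] using finrank_range_le_card b
  have hiff : LinearIndependent ℝ b ↔ n + 1 = Module.finrank ℝ (span ℝ (range b)) := by
    simpa [Set.finrank] using
      (linearIndependent_iff_card_eq_finrank_span (b := b))
  have hcons : LinearIndependent ℝ b ↔ v ∉ span ℝ (range dv) := by
    rw [hb, linearIndependent_fin_cons]
    simp [hlidv]
  constructor
  · intro h
    by_contra hv
    have hli : LinearIndependent ℝ b := hcons.mpr hv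
    have := hiff.1 hli
    omega
  · intro hv
    have hnli : ¬ LinearIndependent ℝ b := fun hli => (hcons.1 hli) hv
    have hne : Module.finrank ℝ (span ℝ (range b)) ≠ n + 1 :=
      fun he => hnli (hiff.2 he.symm)
    omega

end Aux

/-- If `γ` is a striction curve, then the singular set of `F_{(γ,δ)}`
(the points where the differential has rank `< n+1`) is exactly `J × {0}`. -/
theorem stmt11 {n : ℕ} (hn : 0 < n) (J : Set ℝ) (hJ : IsOpen J)
    (γ : ℝ → (Fin (2 * n) → ℝ)) (δ : Fin n → ℝ → (Fin (2 * n) → ℝ))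
    (hγ : ContDiffOn ℝ (⊤ : ℕ∞) γ J) (hδ : ∀ i, ContDiffOn ℝ (⊤ : ℕ∞) (δ i) J)
    (horth : ∀ t ∈ J, ∀ i j, dp (δ i t) (δ j t) = if i = j then 1 else 0)
    (hperp : ∀ t ∈ J, ∀ i j, dp (δ i t) (deriv (δ j) t) = 0)
    (hlin : ∀ t ∈ J,
      LinearIndependent ℝ (Sum.elim (fun i => δ i t) (fun i => deriv (δ i) t)))
    (hstr : ∀ t ∈ J, ∀ i, dp (deriv γ t) (deriv (δ i) t) = 0) :
    ∀ t ∈ J, ∀ u : Fin n → ℝ,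
      (Module.finrank ℝ (LinearMap.range (fderiv ℝ (ruled γ δ) (t, u)).toLinearMap) < n + 1 ↔
        u = 0) := by
  intro t ht u
  classical
  have hγd : HasDerivAt γ (deriv γ t) t :=
    ((hγ.contDiffAt (hJ.mem_nhds ht)).differentiableAt (by norm_num)).hasDerivAt
  have hδd : ∀ i, HasDerivAt (δ i) (deriv (δ i) t) t := fun i =>
    (((hδ i).contDiffAt (hJ.mem_nhds ht)).differentiableAt (by norm_num)).hasDerivAt
  set fstL := ContinuousLinearMap.fst ℝ ℝ (Fin n → ℝ) with hfstL
  set sndL := ContinuousLinearMap.snd ℝ ℝ (Fin n → ℝ) with hsndL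
  set M : ℝ × (Fin n → ℝ) →L[ℝ] (Fin (2*n) → ℝ) :=
    (((1 : ℝ →L[ℝ] ℝ).smulRight (deriv γ t)).comp fstL) +
    ∑ i, (u i • ((1 : ℝ →L[ℝ] ℝ).smulRight (deriv (δ i) t)).comp fstL +
          ((ContinuousLinearMap.proj i).comp sndL).smulRight (δ i t)) with hMdef
  have hM : HasFDerivAt (ruled γ δ) M (t, u) := by
    have h1 : HasFDerivAt (fun p : ℝ × (Fin n → ℝ) => γ p.1)
        (((1 : ℝ →L[ℝ] ℝ).smulRight (deriv γ t)).comp fstL) (t, u) :=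
      hγd.hasFDerivAt.comp (t, u) hasFDerivAt_fst
    have h2 : ∀ i : Fin n, HasFDerivAt (fun p : ℝ × (Fin n → ℝ) => p.2 i • δ i p.1)
        (u i • ((1 : ℝ →L[ℝ] ℝ).smulRight (deriv (δ i) t)).comp fstL +
          ((ContinuousLinearMap.proj i).comp sndL).smulRight (δ i t)) (t, u) := by
      intro i
      have hc : HasFDerivAt (fun p : ℝ × (Fin n → ℝ) => p.2 i)
          ((ContinuousLinearMap.proj i).comp sndL) (t, u) :=
        ((ContinuousLinearMap.proj i).comp sndL).hasFDerivAt
      have hf : HasFDerivAt (fun p : ℝ × (Fin n → ℝ) => δ i p.1)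
          (((1 : ℝ →L[ℝ] ℝ).smulRight (deriv (δ i) t)).comp fstL) (t, u) :=
        (hδd i).hasFDerivAt.comp (t, u) hasFDerivAt_fst
      exact hc.smul hf
    exact h1.add (HasFDerivAt.fun_sum (fun i _ => h2 i))
  have hMapp : ∀ s (w : Fin n → ℝ),
      M (s, w) = s • (deriv γ t + ∑ i, u i • deriv (δ i) t) + ∑ i, w i • δ i t := by
    intro s w
    simp only [hMdef, ContinuousLinearMap.add_apply, ContinuousLinearMap.coe_comp',
      Function.comp_apply, ContinuousLinearMap.smulRight_apply, ContinuousLinearMap.one_apply,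
      ContinuousLinearMap.sum_apply, ContinuousLinearMap.smul_apply, hfstL, hsndL,
      ContinuousLinearMap.coe_fst', ContinuousLinearMap.coe_snd', ContinuousLinearMap.proj_apply,
      smul_add, Finset.sum_add_distrib, Finset.smul_sum, smul_smul, mul_comm]
    abel
  rw [hM.fderiv]
  have hlidv : LinearIndependent ℝ (fun i => δ i t) :=
    (hlin t ht).comp Sum.inl Sum.inl_injective
  rw [rank_lemma' M (deriv γ t + ∑ i, u i • deriv (δ i) t) (fun i => δ i t) hMapp hlidv]
  constructor
  · intro hmem
    have hsum0 : ∀ j, ∑ i, u i * dp (deriv (δ i) t) (deriv (δ j) t) = 0 := by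
      intro j
      have hvj : dp (deriv γ t + ∑ i, u i • deriv (δ i) t) (deriv (δ j) t) = 0 :=
        span_perp' (fun x hx => by obtain ⟨i, rfl⟩ := hx; exact hperp t ht i j) _ hmem
      rw [dp_add_left', dp_sum_left', hstr t ht j, zero_add] at hvj
      exact hvj
    exact gram_inj' _ ((hlin t ht).comp Sum.inr Sum.inr_injective) u hsum0
  · rintro rfl
    have hmem := mem_span_of_perp' hn (hlin t ht)
      (fun i j => hperp t ht i j) (fun j => hstr t ht j)
    simpa using hmem
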